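/- Fix a failure state x_f ∈ ℝ⁶ with components (δx_f, δy_f, δz_f, δẋ_f, δẏ_f, δż_f). For θ ≥ 0 let x(θ) = exp((θ/ω)·A)·x_f be the coast state after the target has advanced by anomaly θ, and define the circularization burn ΔV_circ(θ) = (−x₄(θ), −(3/2)·ω·x₁(θ) − x₅(θ), −x₆(θ)) ∈ ℝ³, i.e. the impulse bringing the coasting state onto a circularized relative orbit. Then the squared burn magnitude ‖ΔV_circ(θ)‖² is differentiable in θ with derivative d/dθ ‖ΔV_circ(θ)‖² = [ (3/4)·(3ω·δx_f + 2·δẏ_f)² − (3/4)·δẋ_f² + ω²·δz_f² − δż_f² ]·sin(2θ) + [ (3/2)·δẋ_f·(3ω·δx_f + 2·δẏ_f) − 2ω·δż_f·δz_f ]·cos(2θ). Consequently, any interior unconstrained minimizer θ* of ‖ΔV_circ(θ)‖² satisfies tan(2θ*) = −[ (3/2)·δẋ_f·(3ω·δx_f + 2·δẏ_f) − 2ω·δż_f·δz_f ] / [ (3/4)·(3ω·δx_f + 2·δẏ_f)² − (3/4)·δẋ_f² + ω²·δz_f² − δż_f² ] whenever the denominator is nonzero. -/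

import Mathlib

noncomputable section

/-- Euclidean norm of a finite real vector. -/
def euclidNorm {m : ℕ} (v : Fin m → ℝ) : ℝ := Real.sqrt (∑ i, v i ^ 2)

/-- The CWH dynamics matrix. -/
def cwhA (ω : ℝ) : Matrix (Fin 6) (Fin 6) ℝ :=
  !![0, 0, 0, 1, 0, 0;
     0, 0, 0, 0, 1, 0;
     0, 0, 0, 0, 0, 1;
     3*ω^2, 0, 0, 0, 2*ω, 0;
     0, 0, 0, -2*ω, 0, 0;
     0, 0, -ω^2, 0, 0, 0]

/-- The CWH input matrix `B = [0; I₃]`. -/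
def cwhB : Matrix (Fin 6) (Fin 3) ℝ :=
  !![0, 0, 0;
     0, 0, 0;
     0, 0, 0;
     1, 0, 0;
     0, 1, 0;
     0, 0, 1]

/-- State transition matrix `exp(t A)`. -/
def expm (ω t : ℝ) : Matrix (Fin 6) (Fin 6) ℝ := NormedSpace.exp (t • cwhA ω)

/-- Horizontal concatenation of two `6 × 3` blocks into a `6 × 6` matrix. -/
def blockCat (M N : Matrix (Fin 6) (Fin 3) ℝ) : Matrix (Fin 6) (Fin 6) ℝ :=
  Matrix.of fun i j => if h : (j : ℕ) < 3 then M i ⟨j, h⟩ else N i ⟨(j : ℕ) - 3, by omega⟩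

/-- The aggregated impulse matrix `Φ_v(T) = [exp(T A) B  B]`. -/
def Phiv (ω T : ℝ) : Matrix (Fin 6) (Fin 6) ℝ := blockCat (expm ω T * cwhB) cwhB

/-- The two-impulse Gramian `G(T) = Φ_v(T) Φ_v(T)ᵀ`. -/
def gram (ω T : ℝ) : Matrix (Fin 6) (Fin 6) ℝ := Phiv ω T * (Phiv ω T).transpose

/-- First three components of a 6-vector. -/
def first3 (v : Fin 6 → ℝ) : Fin 3 → ℝ := fun i => v ⟨(i : ℕ), by omega⟩

/-- Last three components of a 6-vector. -/
def last3 (v : Fin 6 → ℝ) : Fin 3 → ℝ := fun i => v ⟨(i : ℕ) + 3, by omega⟩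

/-- The stacked two-impulse steering solution. -/
def dVsteer (ω T : ℝ) (x₀ xf : Fin 6 → ℝ) : Fin 6 → ℝ :=
  (Phiv ω T)⁻¹.mulVec (xf - (expm ω T).mulVec x₀)

/-- The fixed-duration two-impulse steering cost `J_T(x₀, x_f)`. -/
def Jfix (ω T : ℝ) (x₀ xf : Fin 6 → ℝ) : ℝ :=
  euclidNorm (first3 (dVsteer ω T x₀ xf)) + euclidNorm (last3 (dVsteer ω T x₀ xf))

/-- Euclidean operator norm of a `6 × 6` real matrix. -/
def opNorm (M : Matrix (Fin 6) (Fin 6) ℝ) : ℝ :=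
  ‖(Matrix.toEuclideanCLM (𝕜 := ℝ) M : EuclideanSpace ℝ (Fin 6) →L[ℝ] EuclideanSpace ℝ (Fin 6))‖

/-- The coasting state after the target has advanced by anomaly `θ`, starting from `x_f`. -/
def coast (ω : ℝ) (xf : Fin 6 → ℝ) (θ : ℝ) : Fin 6 → ℝ := (expm ω (θ / ω)).mulVec xf

/-- The circularization burn at anomaly `θ`:
`ΔV_circ(θ) = (−x₄(θ), −(3/2) ω x₁(θ) − x₅(θ), −x₆(θ))`. -/
def dVcirc (ω : ℝ) (xf : Fin 6 → ℝ) (θ : ℝ) : Fin 3 → ℝ :=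
  ![-(coast ω xf θ 3), -(3 / 2 * ω * coast ω xf θ 0) - coast ω xf θ 4, -(coast ω xf θ 5)]

/-! ### Auxiliary material for the proof -/

section AuxVec
variable {α : Type*}
@[simp] lemma cv6_2 (a : α) (u : Fin 5 → α) : Matrix.vecCons a u 2 = u 1 := rfl
@[simp] lemma cv6_3 (a : α) (u : Fin 5 → α) : Matrix.vecCons a u 3 = u 2 := rfl
@[simp] lemma cv6_4 (a : α) (u : Fin 5 → α) : Matrix.vecCons a u 4 = u 3 := rfl
@[simp] lemma cv6_5 (a : α) (u : Fin 5 → α) : Matrix.vecCons a u 5 = u 4 := rfl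
@[simp] lemma cv5_2 (a : α) (u : Fin 4 → α) : Matrix.vecCons a u 2 = u 1 := rfl
@[simp] lemma cv5_3 (a : α) (u : Fin 4 → α) : Matrix.vecCons a u 3 = u 2 := rfl
@[simp] lemma cv5_4 (a : α) (u : Fin 4 → α) : Matrix.vecCons a u 4 = u 3 := rfl
@[simp] lemma cv4_2 (a : α) (u : Fin 3 → α) : Matrix.vecCons a u 2 = u 1 := rfl
@[simp] lemma cv4_3 (a : α) (u : Fin 3 → α) : Matrix.vecCons a u 3 = u 2 := rfl
@[simp] lemma cv3_2 (a : α) (u : Fin 2 → α) : Matrix.vecCons a u 2 = u 1 := rfl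
end AuxVec

/-- Constant part of the CWH state transition matrix. -/
def cwhC0 (ω : ℝ) : Matrix (Fin 6) (Fin 6) ℝ :=
  !![4, 0, 0, 0, 2/ω, 0;
     0, 1, 0, -2/ω, 0, 0;
     0, 0, 0, 0, 0, 0;
     0, 0, 0, 0, 0, 0;
     -6*ω, 0, 0, 0, -3, 0;
     0, 0, 0, 0, 0, 0]

/-- Cosine part of the CWH state transition matrix. -/
def cwhC1 (ω : ℝ) : Matrix (Fin 6) (Fin 6) ℝ :=
  !![-3, 0, 0, 0, -2/ω, 0;
     0, 0, 0, 2/ω, 0, 0;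
     0, 0, 1, 0, 0, 0;
     0, 0, 0, 1, 0, 0;
     6*ω, 0, 0, 0, 4, 0;
     0, 0, 0, 0, 0, 1]

/-- Sine part of the CWH state transition matrix. -/
def cwhC2 (ω : ℝ) : Matrix (Fin 6) (Fin 6) ℝ :=
  !![0, 0, 0, 1/ω, 0, 0;
     6, 0, 0, 0, 4/ω, 0;
     0, 0, 0, 0, 0, 1/ω;
     3*ω, 0, 0, 0, 2, 0;
     0, 0, 0, -2, 0, 0;
     0, 0, -ω, 0, 0, 0]

/-- Secular part of the CWH state transition matrix. -/
def cwhC3 (ω : ℝ) : Matrix (Fin 6) (Fin 6) ℝ :=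
  !![0, 0, 0, 0, 0, 0;
     -6*ω, 0, 0, 0, -3, 0;
     0, 0, 0, 0, 0, 0;
     0, 0, 0, 0, 0, 0;
     0, 0, 0, 0, 0, 0;
     0, 0, 0, 0, 0, 0]

/-- Closed form of the CWH state transition matrix. -/
def stm (ω t : ℝ) : Matrix (Fin 6) (Fin 6) ℝ :=
  cwhC0 ω + Real.cos (ω*t) • cwhC1 ω + Real.sin (ω*t) • cwhC2 ω + t • cwhC3 ω

lemma stm_zero (ω : ℝ) : stm ω 0 = 1 := by
  have h : stm ω 0 = cwhC0 ω + cwhC1 ω := by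
    simp [stm]
  rw [h]
  ext i j
  fin_cases i <;> fin_cases j <;>
    · simp [cwhC0, cwhC1, Matrix.one_apply, Matrix.vecHead, Matrix.vecTail]
      try ring

lemma hAC0 (ω : ℝ) (hω : ω ≠ 0) : cwhA ω * cwhC0 ω = cwhC3 ω := by
  ext i j
  fin_cases i <;> fin_cases j <;>
    · simp [cwhA, cwhC0, cwhC3, Matrix.mul_apply, Fin.sum_univ_six, Matrix.vecHead,
        Matrix.vecTail]
      try field_simp
      try ring

lemma hAC1 (ω : ℝ) (hω : ω ≠ 0) : cwhA ω * cwhC1 ω = ω • cwhC2 ω := by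
  ext i j
  fin_cases i <;> fin_cases j <;>
    · simp [cwhA, cwhC1, cwhC2, Matrix.mul_apply, Fin.sum_univ_six, Matrix.vecHead,
        Matrix.vecTail]
      try field_simp
      try ring

lemma hAC2 (ω : ℝ) (hω : ω ≠ 0) : cwhA ω * cwhC2 ω = (-ω) • cwhC1 ω := by
  ext i j
  fin_cases i <;> fin_cases j <;>
    · simp [cwhA, cwhC2, cwhC1, Matrix.mul_apply, Fin.sum_univ_six, Matrix.vecHead,
        Matrix.vecTail]
      try field_simp
      try ring

lemma hAC3 (ω : ℝ) : cwhA ω * cwhC3 ω = 0 := by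
  ext i j
  fin_cases i <;> fin_cases j <;>
    · simp [cwhA, cwhC3, Matrix.mul_apply, Fin.sum_univ_six, Matrix.vecHead, Matrix.vecTail]
      try ring

lemma expm_eq_stm (ω : ℝ) (hω : ω ≠ 0) (t : ℝ) : expm ω t = stm ω t := by
  letI : NormedRing (Matrix (Fin 6) (Fin 6) ℝ) := Matrix.linftyOpNormedRing
  letI : NormedAlgebra ℝ (Matrix (Fin 6) (Fin 6) ℝ) := Matrix.linftyOpNormedAlgebra
  have hstm : ∀ u : ℝ, HasDerivAt (fun u => stm ω u) (cwhA ω * stm ω u) u := by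
    intro u
    have hl : HasDerivAt (fun v : ℝ => ω*v) ω u := by
      simpa using (hasDerivAt_id u).const_mul ω
    have hc : HasDerivAt (fun v : ℝ => Real.cos (ω*v)) (-(ω * Real.sin (ω*u))) u := by
      have h := (Real.hasDerivAt_cos (ω*u)).comp u hl
      rw [show -(ω * Real.sin (ω*u)) = -Real.sin (ω*u) * ω by ring]; exact h
    have hs : HasDerivAt (fun v : ℝ => Real.sin (ω*v)) (ω * Real.cos (ω*u)) u := by
      have h := (Real.hasDerivAt_sin (ω*u)).comp u hl
      rw [show ω * Real.cos (ω*u) = Real.cos (ω*u) * ω by ring]; exact h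
    have h1 : HasDerivAt (fun v : ℝ => Real.cos (ω*v) • cwhC1 ω)
        ((-(ω * Real.sin (ω*u))) • cwhC1 ω) u := hc.smul_const _
    have h2 : HasDerivAt (fun v : ℝ => Real.sin (ω*v) • cwhC2 ω)
        ((ω * Real.cos (ω*u))• cwhC2 ω) u := hs.smul_const _
    have h3 : HasDerivAt (fun v : ℝ => v • cwhC3 ω) (cwhC3 ω) u := by
      have h := (hasDerivAt_id u).smul_const (cwhC3 ω)
      rw [one_smul] at h; exact h
    have hde : cwhA ω * stm ω u =
        (-(ω * Real.sin (ω*u))) • cwhC1 ω + (ω * Real.cos (ω*u)) • cwhC2 ω + cwhC3 ω := by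
      unfold stm
      rw [mul_add, mul_add, mul_add, hAC0 ω hω, mul_smul_comm, mul_smul_comm, mul_smul_comm,
        hAC1 ω hω, hAC2 ω hω, hAC3 ω, smul_zero, smul_smul, smul_smul]
      module
    rw [hde]
    exact ((h1.const_add (cwhC0 ω)).add h2).add h3
  have hexp : ∀ u : ℝ, HasDerivAt (fun u : ℝ => expm ω (-u))
      (-(cwhA ω * expm ω (-u))) u := by
    intro u
    have houter := hasDerivAt_exp_smul_const' (𝕂 := ℝ) (cwhA ω) (-u)
    have h : HasDerivAt (fun u : ℝ => NormedSpace.exp ((-u) • cwhA ω))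
        ((-1 : ℝ) • (cwhA ω * NormedSpace.exp ((-u) • cwhA ω))) u :=
      HasDerivAt.scomp u houter (hasDerivAt_neg u)
    simpa [expm, Function.comp, neg_one_smul] using h
  have comm : ∀ u : ℝ, cwhA ω * expm ω (-u) = expm ω (-u) * cwhA ω := by
    intro u
    exact (((Commute.refl (cwhA ω)).smul_right (-u)).exp_right).eq
  have hg : ∀ u : ℝ, HasDerivAt (fun u : ℝ => expm ω (-u) * stm ω u) 0 u := by
    intro u
    have h := (hexp u).mul (hstm u)
    have hzero : -(cwhA ω * expm ω (-u)) * stm ω u +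
        expm ω (-u) * (cwhA ω * stm ω u) = 0 := by
      rw [← mul_assoc, ← comm u, neg_mul, mul_assoc, neg_add_cancel]
    rwa [hzero] at h
  have hconst : expm ω (-t) * stm ω t = expm ω (-(0:ℝ)) * stm ω 0 :=
    is_const_of_deriv_eq_zero (fun x => (hg x).differentiableAt)
      (fun x => (hg x).deriv) t 0
  have key : expm ω (-t) * stm ω t = 1 := by
    rw [hconst, stm_zero, mul_one]
    simp [expm, NormedSpace.exp_zero]
  have hinv : expm ω t * expm ω (-t) = 1 := by
    rw [expm, expm]
    refine (NormedSpace.exp_add_of_commute_of_mem_ball (𝕂 := ℝ)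
      (((Commute.refl (cwhA ω)).smul_left t).smul_right (-t))
      ((NormedSpace.expSeries_radius_eq_top ℝ (Matrix (Fin 6) (Fin 6) ℝ)).symm ▸ edist_lt_top _ _)
      ((NormedSpace.expSeries_radius_eq_top ℝ (Matrix (Fin 6) (Fin 6) ℝ)).symm ▸ edist_lt_top _ _)).symm.trans ?_
    rw [← add_smul]
    simp [NormedSpace.exp_zero]
  calc expm ω t = expm ω t * (expm ω (-t) * stm ω t) := by rw [key, mul_one]
    _ = (expm ω t * expm ω (-t)) * stm ω t := (mul_assoc _ _ _).symm
    _ = stm ω t := by rw [hinv, one_mul]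

/-- **Stationarity condition for the minimal-fuel circularization burn.**
The squared burn magnitude `‖ΔV_circ(θ)‖²` is differentiable with derivative
`E sin(2θ) + F cos(2θ)`, where `E` and `F` are the stated functions of the failure state;
consequently any interior unconstrained minimizer `θ*` satisfies `tan(2θ*) = −F/E`
whenever `E ≠ 0`. -/
theorem circularization_burn_stationarity (ω : ℝ) (hω : 0 < ω) (xf : Fin 6 → ℝ) :
    (∀ θ : ℝ, 0 ≤ θ →
      HasDerivAt (fun θ => euclidNorm (dVcirc ω xf θ) ^ 2)
        ((3 / 4 * (3 * ω * xf 0 + 2 * xf 4) ^ 2 - 3 / 4 * xf 3 ^ 2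
            + ω ^ 2 * xf 2 ^ 2 - xf 5 ^ 2) * Real.sin (2 * θ) +
         (3 / 2 * xf 3 * (3 * ω * xf 0 + 2 * xf 4) - 2 * ω * xf 5 * xf 2) * Real.cos (2 * θ))
        θ) ∧
    (∀ θs : ℝ, 0 < θs →
      IsLocalMin (fun θ => euclidNorm (dVcirc ω xf θ) ^ 2) θs →
      (3 / 4 * (3 * ω * xf 0 + 2 * xf 4) ^ 2 - 3 / 4 * xf 3 ^ 2
          + ω ^ 2 * xf 2 ^ 2 - xf 5 ^ 2) ≠ 0 →
      Real.tan (2 * θs) =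
        -(3 / 2 * xf 3 * (3 * ω * xf 0 + 2 * xf 4) - 2 * ω * xf 5 * xf 2) /
          (3 / 4 * (3 * ω * xf 0 + 2 * xf 4) ^ 2 - 3 / 4 * xf 3 ^ 2
            + ω ^ 2 * xf 2 ^ 2 - xf 5 ^ 2)) := by
  have hω' : ω ≠ 0 := ne_of_gt hω
  -- closed form of the squared burn magnitude
  have hfun : (fun θ => euclidNorm (dVcirc ω xf θ) ^ 2) = (fun θ =>
      (3*ω*Real.sin θ*xf 0 + Real.cos θ*xf 3 + 2*Real.sin θ*xf 4)^2
      + (3/2*ω*Real.cos θ*xf 0 - 1/2*Real.sin θ*xf 3 + Real.cos θ*xf 4)^2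
      + (ω*Real.sin θ*xf 2 - Real.cos θ*xf 5)^2) := by
    funext θ
    have hcoast : coast ω xf θ = (stm ω (θ/ω)).mulVec xf := by
      rw [coast, expm_eq_stm ω hω']
    have hθ : ω * (θ/ω) = θ := by field_simp
    have hcosθ : Real.cos (ω * (θ/ω)) = Real.cos θ := by rw [hθ]
    have hsinθ : Real.sin (ω * (θ/ω)) = Real.sin θ := by rw [hθ]
    have h1 : euclidNorm (dVcirc ω xf θ) ^ 2 = ∑ i, dVcirc ω xf θ i ^ 2 :=
      Real.sq_sqrt (Finset.sum_nonneg fun i _ => sq_nonneg _)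
    rw [h1, Fin.sum_univ_three]
    simp only [dVcirc, Matrix.cons_val_zero, Matrix.cons_val_one, Matrix.head_cons, cv4_2]
    rw [hcoast]
    simp only [stm, Matrix.mulVec, dotProduct, Fin.sum_univ_six, Matrix.add_apply,
      Matrix.smul_apply, cwhC0, cwhC1, cwhC2, cwhC3, Matrix.cons_val', Matrix.cons_val_zero,
      Matrix.cons_val_one, Matrix.head_cons, cv6_2, cv6_3, cv6_4, cv6_5, cv5_2, cv5_3, cv5_4,
      cv4_2, cv4_3, cv3_2, Matrix.empty_val', Matrix.cons_val_fin_one, Matrix.head_fin_const,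
      Matrix.of_apply, hcosθ, hsinθ, smul_eq_mul,
      Matrix.vecHead, Matrix.vecTail, Function.comp]
    field_simp
    ring
  constructor
  · intro θ _
    rw [hfun]
    have hs := Real.hasDerivAt_sin θ
    have hc := Real.hasDerivAt_cos θ
    have hd0 : HasDerivAt (fun θ => 3*ω*Real.sin θ*xf 0 + Real.cos θ*xf 3 + 2*Real.sin θ*xf 4)
        (3*ω*Real.cos θ*xf 0 + -Real.sin θ*xf 3 + 2*Real.cos θ*xf 4) θ :=
      (((hs.const_mul (3*ω)).mul_const (xf 0)).add (hc.mul_const (xf 3))).add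
        ((hs.const_mul 2).mul_const (xf 4))
    have hd1 : HasDerivAt
        (fun θ => 3/2*ω*Real.cos θ*xf 0 - 1/2*Real.sin θ*xf 3 + Real.cos θ*xf 4)
        (3/2*ω*(-Real.sin θ)*xf 0 - 1/2*Real.cos θ*xf 3 + -Real.sin θ*xf 4) θ := by
      have hh : HasDerivAt (fun θ : ℝ => 3/2*ω*Real.cos θ*xf 0)
          (3/2*ω*(-Real.sin θ)*xf 0) θ := by
        have := (hc.const_mul (3/2*ω)).mul_const (xf 0)
        convert this using 2 <;> ring
      exact (hh.sub ((hs.const_mul (1/2)).mul_const (xf 3))).add (hc.mul_const (xf 4))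
    have hd2 : HasDerivAt (fun θ => ω*Real.sin θ*xf 2 - Real.cos θ*xf 5)
        (ω*Real.cos θ*xf 2 - (-Real.sin θ)*xf 5) θ :=
      ((hs.const_mul ω).mul_const (xf 2)).sub (hc.mul_const (xf 5))
    have h := ((hd0.pow 2).add (hd1.pow 2)).add (hd2.pow 2)
    refine h.congr_deriv ?_
    rw [Real.sin_two_mul, Real.cos_two_mul']
    push_cast
    ring
  · intro θs hθs hmin hE
    have hd := (by
      rw [hfun]
      have hs := Real.hasDerivAt_sin θs
      have hc := Real.hasDerivAt_cos θs
      have hd0 : HasDerivAt (fun θ => 3*ω*Real.sin θ*xf 0 + Real.cos θ*xf 3 + 2*Real.sin θ*xf 4)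
          (3*ω*Real.cos θs*xf 0 + -Real.sin θs*xf 3 + 2*Real.cos θs*xf 4) θs :=
        (((hs.const_mul (3*ω)).mul_const (xf 0)).add (hc.mul_const (xf 3))).add
          ((hs.const_mul 2).mul_const (xf 4))
      have hd1 : HasDerivAt
          (fun θ => 3/2*ω*Real.cos θ*xf 0 - 1/2*Real.sin θ*xf 3 + Real.cos θ*xf 4)
          (3/2*ω*(-Real.sin θs)*xf 0 - 1/2*Real.cos θs*xf 3 + -Real.sin θs*xf 4) θs := by
        have hh : HasDerivAt (fun θ : ℝ => 3/2*ω*Real.cos θ*xf 0)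
            (3/2*ω*(-Real.sin θs)*xf 0) θs := by
          have := (hc.const_mul (3/2*ω)).mul_const (xf 0)
          convert this using 2 <;> ring
        exact (hh.sub ((hs.const_mul (1/2)).mul_const (xf 3))).add (hc.mul_const (xf 4))
      have hd2 : HasDerivAt (fun θ => ω*Real.sin θ*xf 2 - Real.cos θ*xf 5)
          (ω*Real.cos θs*xf 2 - (-Real.sin θs)*xf 5) θs :=
        ((hs.const_mul ω).mul_const (xf 2)).sub (hc.mul_const (xf 5))
      have h := ((hd0.pow 2).add (hd1.pow 2)).add (hd2.pow 2)
      refine h.congr_deriv ?_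
      rw [Real.sin_two_mul, Real.cos_two_mul']
      push_cast
      ring :
      HasDerivAt (fun θ => euclidNorm (dVcirc ω xf θ) ^ 2)
        ((3 / 4 * (3 * ω * xf 0 + 2 * xf 4) ^ 2 - 3 / 4 * xf 3 ^ 2
            + ω ^ 2 * xf 2 ^ 2 - xf 5 ^ 2) * Real.sin (2 * θs) +
         (3 / 2 * xf 3 * (3 * ω * xf 0 + 2 * xf 4) - 2 * ω * xf 5 * xf 2) * Real.cos (2 * θs))
        θs)
    have h0 := hmin.hasDerivAt_eq_zero hd
    set E := (3 / 4 * (3 * ω * xf 0 + 2 * xf 4) ^ 2 - 3 / 4 * xf 3 ^ 2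
        + ω ^ 2 * xf 2 ^ 2 - xf 5 ^ 2) with hEdef
    set F := (3 / 2 * xf 3 * (3 * ω * xf 0 + 2 * xf 4) - 2 * ω * xf 5 * xf 2) with hFdef
    have hcos : Real.cos (2 * θs) ≠ 0 := by
      intro hcz
      apply hE
      have hs1 : Real.sin (2 * θs) ^ 2 = 1 := by
        have := Real.sin_sq_add_cos_sq (2 * θs)
        rw [hcz] at this
        nlinarith
      have hEs : E * Real.sin (2 * θs) = 0 := by
        rw [hcz] at h0
        linarith [h0]
      rcases mul_eq_zero.1 hEs with h | h
      · exact h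
      · nlinarith
    rw [Real.tan_eq_sin_div_cos, div_eq_div_iff hcos hE]
    linear_combination h0

end
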